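/- (Abstract form of Theorem 3.8) Let n ≥ 1 be an integer and let E be a finite-dimensional complex inner product space with dim_ℂ E = n. Let U, V : E → E be unitary linear maps satisfying U(V(w)) = exp(2πi/n)·V(U(w)) for all w ∈ E. Suppose v ∈ E is a unit vector with U(v) = λ₀·v for some λ₀ ∈ ℂ. Then: (1) for every natural number l, U(V^l(v)) = exp(2πi·l/n)·λ₀·V^l(v); (2) the family (V^l(v))_{l=0,…,n−1} is orthonormal; (3) this family is a basis of E. In particular U has n distinct eigenvalues exp(2πi·l/n)·λ₀, l = 0,…,n−1. -/

import Mathlib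

/-- abstract form of Theorem 3.8: if `U, V` are unitary
endomorphisms of an `n`-dimensional complex inner product space `E` with
`U∘V = exp(2πi/n)·V∘U`, and `v` is a unit eigenvector of `U` with eigenvalue
`λ₀`, then the `V^l v` are eigenvectors of `U` with eigenvalues
`exp(2πi·l/n)·λ₀`, and `(V^l v)_{l=0,…,n−1}` is an orthonormal basis of `E`;
in particular `U` has `n` distinct eigenvalues `exp(2πi·l/n)·λ₀`. -/
theorem statement9 (n : ℕ) (hn : 1 ≤ n) (E : Type*) [NormedAddCommGroup E]
    [InnerProductSpace ℂ E] [FiniteDimensional ℂ E]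
    (hdim : Module.finrank ℂ E = n)
    (U V : Module.End ℂ E)
    (hU : ∀ x y : E, (inner ℂ (U x) (U y) : ℂ) = inner ℂ x y)
    (hV : ∀ x y : E, (inner ℂ (V x) (V y) : ℂ) = inner ℂ x y)
    (hcomm : ∀ w : E, U (V w) = Complex.exp (2 * Real.pi * Complex.I / (n : ℂ)) • V (U w))
    (v : E) (hv : ‖v‖ = 1) (lam₀ : ℂ) (hUv : U v = lam₀ • v) :
    (∀ l : ℕ, U ((V ^ l) v)
        = (Complex.exp (2 * Real.pi * Complex.I * (l : ℂ) / (n : ℂ)) * lam₀) • (V ^ l) v)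
    ∧ Orthonormal ℂ (fun l : Fin n => (V ^ (l : ℕ)) v)
    ∧ Submodule.span ℂ (Set.range (fun l : Fin n => (V ^ (l : ℕ)) v)) = ⊤
    ∧ Function.Injective
        (fun l : Fin n => Complex.exp (2 * Real.pi * Complex.I * ((l : ℕ) : ℂ) / (n : ℂ)) * lam₀)
    ∧ ∀ l : Fin n, Module.End.HasEigenvalue U
        (Complex.exp (2 * Real.pi * Complex.I * ((l : ℕ) : ℂ) / (n : ℂ)) * lam₀) := by
  have hn0 : (n : ℂ) ≠ 0 := by exact_mod_cast Nat.one_le_iff_ne_zero.mp hn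
  have hvv : (inner ℂ v v : ℂ) = 1 := by
    rw [inner_self_eq_norm_sq_to_K, hv]; norm_num
  have hlam : (starRingEnd ℂ) lam₀ * lam₀ = 1 := by
    have := hU v v
    rw [hUv, inner_smul_left, inner_smul_right, hvv] at this
    simpa [mul_assoc] using this
  have hlam0 : lam₀ ≠ 0 := by
    intro h; rw [h, mul_zero] at hlam; exact zero_ne_one hlam
  -- Part 1
  have part1 : ∀ l : ℕ, U ((V ^ l) v)
      = (Complex.exp (2 * Real.pi * Complex.I * (l : ℂ) / (n : ℂ)) * lam₀) • (V ^ l) v := by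
    intro l
    induction l with
    | zero => simpa using hUv
    | succ l ih =>
      have hp : (V ^ (l + 1)) v = V ((V ^ l) v) := by
        rw [pow_succ']; rfl
      rw [hp, hcomm, ih, map_smul, smul_smul, ← hp]
      congr 1
      rw [← mul_assoc, ← Complex.exp_add]
      congr 1
      push_cast
      field_simp
      ring
  -- exp(2πi m / n) ≠ 1 for 0 < m < n
  have hexp_ne : ∀ m : ℕ, 0 < m → m < n →
      Complex.exp (2 * Real.pi * Complex.I * (m : ℂ) / (n : ℂ)) ≠ 1 := by
    intro m hm hmn h
    rw [Complex.exp_eq_one_iff] at h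
    obtain ⟨k, hk⟩ := h
    have h2 : (2 * Real.pi * Complex.I : ℂ) ≠ 0 := by
      simp [Real.pi_ne_zero, Complex.I_ne_zero]
    have hm' : (m : ℂ) = (k : ℂ) * n := by
      apply mul_left_cancel₀ h2
      field_simp at hk
      linear_combination (2 * Real.pi * Complex.I) * hk
    have hmZ : (m : ℤ) = k * n := by exact_mod_cast hm'
    have h1 : (0 : ℤ) < m := by exact_mod_cast hm
    have h2' : (m : ℤ) < n := by exact_mod_cast hmn
    have hnZ : (1 : ℤ) ≤ n := by exact_mod_cast hn
    have hk1 : 1 ≤ k := by nlinarith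
    nlinarith
  -- inner v (V^m v) = 0 for 0 < m < n
  have hinner0 : ∀ m : ℕ, 0 < m → m < n → (inner ℂ v ((V ^ m) v) : ℂ) = 0 := by
    intro m hm hmn
    have h := hU v ((V ^ m) v)
    rw [hUv, part1 m, inner_smul_left, inner_smul_right] at h
    set X : ℂ := inner ℂ v ((V ^ m) v) with hX
    set e : ℂ := Complex.exp (2 * Real.pi * Complex.I * (m : ℂ) / (n : ℂ)) with he
    have h2 : e * X = X := by linear_combination h - e * X * hlam
    by_contra hne
    exact hexp_ne m hm hmn (mul_right_cancel₀ hne (h2.trans (one_mul X).symm))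
  -- V^k preserves inner products
  have hVpow : ∀ (k : ℕ) (x y : E), (inner ℂ ((V ^ k) x) ((V ^ k) y) : ℂ) = inner ℂ x y := by
    intro k
    induction k with
    | zero => simp
    | succ k ih =>
      intro x y
      have hp : ∀ z : E, (V ^ (k + 1)) z = V ((V ^ k) z) := by
        intro z; rw [pow_succ']; rfl
      rw [hp, hp, hV, ih]
  have key : ∀ i j : ℕ, i ≤ j → (inner ℂ ((V ^ i) v) ((V ^ j) v) : ℂ) = inner ℂ v ((V ^ (j - i)) v) := by
    intro i j hij
    have : (V ^ j) v = (V ^ i) ((V ^ (j - i)) v) := by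
      rw [← Module.End.mul_apply, ← pow_add, Nat.add_sub_cancel' hij]
    rw [this, hVpow i v ((V ^ (j - i)) v)]
  -- Orthonormality
  have part2 : Orthonormal ℂ (fun l : Fin n => (V ^ (l : ℕ)) v) := by
    rw [orthonormal_iff_ite]
    intro i j
    have hi := i.2
    have hj := j.2
    by_cases hij : i = j
    · subst hij
      rw [hVpow, hvv, if_pos rfl]
    · have hij' : (i : ℕ) ≠ (j : ℕ) := fun hh => hij (Fin.ext hh)
      simp only [if_neg hij]
      rcases le_or_gt (i : ℕ) (j : ℕ) with h | h
      · rw [key _ _ h]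
        exact hinner0 _ (by omega) (by omega)
      · rw [← inner_conj_symm, key _ _ (le_of_lt h), hinner0 _ (by omega) (by omega), map_zero]
  -- span
  haveI : Nonempty (Fin n) := ⟨⟨0, hn⟩⟩
  have part3 : Submodule.span ℂ (Set.range (fun l : Fin n => (V ^ (l : ℕ)) v)) = ⊤ := by
    apply LinearIndependent.span_eq_top_of_card_eq_finrank part2.linearIndependent
    simp [hdim]
  -- injectivity
  have part4 : Function.Injective
      (fun l : Fin n => Complex.exp (2 * Real.pi * Complex.I * ((l : ℕ) : ℂ) / (n : ℂ)) * lam₀) := by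
    intro i j h
    simp only at h
    have h' := mul_right_cancel₀ hlam0 h
    have hi := i.2
    have hj := j.2
    rcases lt_trichotomy (i : ℕ) (j : ℕ) with hlt | heq | hlt
    · exfalso
      apply hexp_ne ((j : ℕ) - (i : ℕ)) (by omega) (by omega)
      have hcast : (2 * Real.pi * Complex.I * ((((j : ℕ) - (i : ℕ)) : ℕ) : ℂ) / (n : ℂ))
          = 2 * Real.pi * Complex.I * ((j : ℕ) : ℂ) / (n : ℂ)
            - 2 * Real.pi * Complex.I * ((i : ℕ) : ℂ) / (n : ℂ) := by
        rw [Nat.cast_sub (le_of_lt hlt)]; ring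
      rw [hcast, Complex.exp_sub, ← h', div_self (Complex.exp_ne_zero _)]
    · exact Fin.ext heq
    · exfalso
      apply hexp_ne ((i : ℕ) - (j : ℕ)) (by omega) (by omega)
      have hcast : (2 * Real.pi * Complex.I * ((((i : ℕ) - (j : ℕ)) : ℕ) : ℂ) / (n : ℂ))
          = 2 * Real.pi * Complex.I * ((i : ℕ) : ℂ) / (n : ℂ)
            - 2 * Real.pi * Complex.I * ((j : ℕ) : ℂ) / (n : ℂ) := by
        rw [Nat.cast_sub (le_of_lt hlt)]; ring
      rw [hcast, Complex.exp_sub, h', div_self (Complex.exp_ne_zero _)]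
  -- eigenvalues
  have part5 : ∀ l : Fin n, Module.End.HasEigenvalue U
      (Complex.exp (2 * Real.pi * Complex.I * ((l : ℕ) : ℂ) / (n : ℂ)) * lam₀) := by
    intro l
    apply Module.End.hasEigenvalue_of_hasEigenvector (x := (V ^ (l : ℕ)) v)
    constructor
    · rw [Module.End.mem_eigenspace_iff]; exact part1 l
    · intro h0
      have h1 := hVpow (l : ℕ) v v
      rw [h0, inner_zero_left, hvv] at h1
      exact one_ne_zero h1.symm
  exact ⟨part1, part2, part3, part4, part5⟩
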